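/- There exist constants C > 0 and N₀ such that for every integer N ≥ N₀ and every integer a with a ≡ N (mod 2) and |a|/2 ≤ (N/2)^{2/3}, the central binomial coefficient satisfies |C(N, (N−a)/2) − (2^N / √(π N / 2)) · exp(−a²/(2N))| ≤ C · (2^N / √(N/2)) · exp(−a²/(2N)) · (1 + |a|/2)/(N/2). (In half-integer notation n = N/2, α = a/2: C(2n, n−α) = (4^n/√(nπ)) exp(−α²/n) (1 + O((1+|α|)/n)) uniformly for |α| ≤ n^{2/3}.) -/

import Mathlib

open Real Filter Topology Finset

/-- Binomial coefficient `C(N, b)` with an integer lower argument, equal to `0` when `b < 0`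
(and automatically `0` when `b > N`). -/
def binomZ (N : ℕ) (b : ℤ) : ℕ := if 0 ≤ b then N.choose b.toNat else 0

open Stirling in
lemma stirling_log_bounds (m : ℕ) :
    log (√π) ≤ log (stirlingSeq (m+1)) ∧
    log (stirlingSeq (m+1)) ≤ log (√π) + 1/(2*(m+1)) := by
  have hπ : (0:ℝ) < √π := Real.sqrt_pos.mpr Real.pi_pos
  have hlim' : Tendsto (Real.log ∘ stirlingSeq ∘ Nat.succ) atTop (𝓝 (log (√π))) := by
    apply (Real.continuousAt_log hπ.ne').tendsto.comp
    exact tendsto_stirlingSeq_sqrt_pi.comp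
      ((tendsto_add_atTop_nat 1).congr (fun p => by omega))
  constructor
  · exact Antitone.le_of_tendsto log_stirlingSeq'_antitone hlim' m
  · have key : ∀ p : ℕ, log (stirlingSeq (m+1)) - log (stirlingSeq (m+1+p)) ≤
        1/2 * (1/(m+1) - 1/((m:ℝ)+1+p)) := by
      intro p
      induction p with
      | zero => simp
      | succ q ih =>
        have h1 : log (stirlingSeq (m+q+1)) - log (stirlingSeq (m+q+2)) ≤ 1/(4*((m+q+1:ℕ):ℝ)^2) :=
          log_stirlingSeq_sub_log_stirlingSeq_succ (m+q+1)
        have hq : (0:ℝ) < (m:ℝ)+1+q := by positivity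
        have h2 : (1:ℝ)/(4 * ((m+q+1 : ℕ) : ℝ)^2) ≤
            1/2 * (1/((m:ℝ)+1+q) - 1/((m:ℝ)+1+(q+1))) := by
          have e1 : 1/((m:ℝ)+1+q) - 1/((m:ℝ)+1+(q+1)) =
              1/(((m:ℝ)+1+q)*((m:ℝ)+1+(q+1))) := by
            field_simp
            ring
          rw [e1]
          have e1b : (1:ℝ)/2 * (1/(((m:ℝ)+1+q)*((m:ℝ)+1+(q+1)))) =
              1/(2*(((m:ℝ)+1+q)*((m:ℝ)+1+(q+1)))) := by
            have hq2 : ((m:ℝ)+1+q)*((m:ℝ)+1+(q+1)) ≠ 0 := by positivity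
            field_simp
          rw [e1b]
          apply one_div_le_one_div_of_le (by positivity)
          push_cast
          nlinarith [sq_nonneg ((m:ℝ)+q)]
        have h3 : stirlingSeq (m+1+(q+1)) = stirlingSeq ((m+q)+2) := by ring_nf
        have h4 : stirlingSeq (m+1+q) = stirlingSeq ((m+q)+1) := by ring_nf
        push_cast at ih ⊢
        rw [h3]
        rw [h4] at ih
        have := h1.trans h2
        push_cast at this
        linarith
    have hlim2 : Tendsto (fun p : ℕ => log (stirlingSeq (m+1)) - log (stirlingSeq (m+1+p)))
        atTop (𝓝 (log (stirlingSeq (m+1)) - log (√π))) := by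
      apply Tendsto.const_sub
      apply (Real.continuousAt_log hπ.ne').tendsto.comp
      exact tendsto_stirlingSeq_sqrt_pi.comp
        ((tendsto_add_atTop_nat (m+1)).congr (fun p => by omega))
    have hle : log (stirlingSeq (m+1)) - log (√π) ≤ 1/(2*((m:ℝ)+1)) := by
      apply le_of_tendsto hlim2
      filter_upwards with p
      have h5 : (0:ℝ) ≤ 1/((m:ℝ)+1+p) := by positivity
      have h6 : 1/2 * (1/((m:ℝ)+1) - 1/((m:ℝ)+1+p)) ≤ 1/(2*((m:ℝ)+1)) := by
        have e2 : (1:ℝ)/(2*((m:ℝ)+1)) = 1/2 * (1/((m:ℝ)+1)) := by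
          have hm : ((m:ℝ)+1) ≠ 0 := by positivity
          field_simp
        rw [e2]
        nlinarith [h5]
      exact (key p).trans h6
    push_cast at hle
    linarith

noncomputable def stirS (y : ℝ) : ℝ :=
  y * Real.log y - y + Real.log y / 2 + Real.log (2*π) / 2

lemma eps_bounds (n : ℕ) (hn : 1 ≤ n) :
    0 ≤ Real.log (n.factorial : ℝ) - stirS n ∧ Real.log (n.factorial : ℝ) - stirS n ≤ 1/(2*(n:ℝ)) := by
  obtain ⟨m, rfl⟩ : ∃ m, n = m + 1 := ⟨n - 1, by omega⟩
  have hb := stirling_log_bounds m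
  have hnpos : (0:ℝ) < ((m+1 : ℕ) : ℝ) := by positivity
  have hform := Stirling.log_stirlingSeq_formula (m+1)
  have h2n : Real.log (2 * ((m+1:ℕ):ℝ)) = Real.log 2 + Real.log ((m+1:ℕ):ℝ) :=
    Real.log_mul two_ne_zero hnpos.ne'
  have hne : Real.log (((m+1:ℕ):ℝ) / Real.exp 1) = Real.log ((m+1:ℕ):ℝ) - 1 := by
    rw [Real.log_div hnpos.ne' (Real.exp_ne_zero 1), Real.log_exp]
  have hsp : Real.log (√π) = Real.log π / 2 := Real.log_sqrt Real.pi_pos.le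
  have h2p : Real.log (2*π) = Real.log 2 + Real.log π :=
    Real.log_mul two_ne_zero Real.pi_ne_zero
  have hid : Real.log ((m+1:ℕ).factorial : ℝ) - stirS ((m+1:ℕ):ℝ) =
      Real.log (Stirling.stirlingSeq (m+1)) - Real.log (√π) := by
    rw [stirS, h2p, hsp, hform, h2n, hne]
    ring
  rw [hid]
  refine ⟨by linarith [hb.1], (sub_le_iff_le_add'.mpr ?_)⟩
  have := hb.2
  push_cast at this ⊢
  linarith


lemma log_taylor3 {x : ℝ} (h : |x| ≤ 1/2) :
    |Real.log (1-x) + (x + x^2/2 + x^3/3)| ≤ 2*x^4 := by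
  have h1 : |x| < 1 := lt_of_le_of_lt h (by norm_num)
  have := Real.abs_log_sub_add_sum_range_le h1 3
  have hs : ∑ i ∈ range 3, x ^ (i + 1) / ((i:ℝ) + 1) = x + x^2/2 + x^3/3 := by
    simp [Finset.sum_range_succ]
    ring
  rw [hs] at this
  have h2 : |x| ^ 4 / (1 - |x|) ≤ 2*x^4 := by
    have hx4 : |x|^4 = x^4 := by
      rw [← abs_pow]
      exact abs_of_nonneg (by positivity)
    rw [div_le_iff₀ (by linarith)]
    nlinarith [pow_nonneg (abs_nonneg x) 4, abs_nonneg x]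
  calc |Real.log (1-x) + (x + x^2/2 + x^3/3)| = |(x + x^2/2 + x^3/3) + Real.log (1-x)| := by
        rw [add_comm]
    _ ≤ |x|^4 / (1 - |x|) := this
    _ ≤ 2*x^4 := h2

lemma entropy_bound {x : ℝ} (h : |x| ≤ 1/2) :
    |(1-x)*Real.log (1-x) + (1+x)*Real.log (1+x) - x^2| ≤ 7*x^4 := by
  have h1 := log_taylor3 h
  have h2 := log_taylor3 (x := -x) (by rwa [abs_neg])
  obtain ⟨A, hA⟩ : ∃ A, Real.log (1-x) = A - (x + x^2/2 + x^3/3) :=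
    ⟨Real.log (1-x) + (x + x^2/2 + x^3/3), by ring⟩
  obtain ⟨B, hB⟩ : ∃ B, Real.log (1+x) = B - (-x + x^2/2 - x^3/3) :=
    ⟨Real.log (1+x) + (-x + x^2/2 - x^3/3), by ring⟩
  have hAb : |A| ≤ 2*x^4 := by
    rw [hA] at h1
    calc |A| = |A - (x + x^2/2 + x^3/3) + (x + x^2/2 + x^3/3)| := by ring_nf
      _ ≤ 2*x^4 := h1
  have hBb : |B| ≤ 2*x^4 := by
    rw [show (1:ℝ) - -x = 1 + x by ring, hB] at h2
    calc |B| = |B - (-x + x^2/2 - x^3/3) + (-x + (-x)^2/2 + (-x)^3/3)| := by ring_nf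
      _ ≤ 2*(-x)^4 := h2
      _ = 2*x^4 := by ring
  rw [hA, hB]
  have hx := abs_le.mp h
  rw [abs_le] at hAb hBb ⊢
  have p1 : 0 ≤ (1-x)*(A + 2*x^4) := mul_nonneg (by linarith) (by linarith)
  have p2 : 0 ≤ (1-x)*(2*x^4 - A) := mul_nonneg (by linarith) (by linarith)
  have p3 : 0 ≤ (1+x)*(B + 2*x^4) := mul_nonneg (by linarith) (by linarith)
  have p4 : 0 ≤ (1+x)*(2*x^4 - B) := mul_nonneg (by linarith) (by linarith)
  have p0 : (0:ℝ) ≤ x^4 := by positivity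
  constructor
  · nlinarith [p1, p3, p0]
  · nlinarith [p2, p4, p0]

lemma log_one_sub_sq {x : ℝ} (h : |x| ≤ 1/2) : |Real.log (1 - x^2)| ≤ 2*x^2 := by
  have hx2 : |x^2| ≤ 1/2 := by
    rw [abs_of_nonneg (sq_nonneg x)]
    nlinarith [abs_nonneg x, abs_le.mp h]
  have h1 := log_taylor3 (x := x^2) hx2
  have h2 : |(x^2 + (x^2)^2/2 + (x^2)^3/3)| ≤ x^2 + x^4 := by
    rw [abs_of_nonneg (by positivity)]
    nlinarith [sq_nonneg x, abs_le.mp hx2, sq_nonneg (x^2), pow_nonneg (sq_nonneg x) 3]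
  calc |Real.log (1 - x^2)|
      = |(Real.log (1-x^2) + (x^2 + (x^2)^2/2 + (x^2)^3/3)) - (x^2 + (x^2)^2/2 + (x^2)^3/3)| := by
        ring_nf
    _ ≤ |Real.log (1-x^2) + (x^2 + (x^2)^2/2 + (x^2)^3/3)| + |(x^2 + (x^2)^2/2 + (x^2)^3/3)| :=
        abs_sub _ _
    _ ≤ 2*(x^2)^4 + (x^2 + x^4) := add_le_add h1 h2
    _ ≤ 2*x^2 := by
        have q1 : x^2 ≤ 1/4 := by nlinarith [abs_le.mp h]
        have q2 : x^4 ≤ (1/4)*x^2 := by nlinarith [sq_nonneg x, sq_nonneg (x^2)]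
        have q3 : (x^2)^4 ≤ (1/64)*x^2 := by nlinarith [sq_nonneg x, sq_nonneg (x^2), sq_nonneg (x^3), pow_nonneg (sq_nonneg x) 2, pow_nonneg (sq_nonneg x) 3]
        linarith [sq_nonneg x]

lemma exp_sub_one_abs {E : ℝ} (h : |E| ≤ 1) : |Real.exp E - 1| ≤ 3 * |E| := by
  rcases le_or_gt 0 E with hE | hE
  · have h1 : Real.exp E - 1 ≥ 0 := by
      have := Real.one_le_exp hE
      linarith
    have h2 : (1 - E) * Real.exp E ≤ 1 := by
      have := Real.add_one_le_exp (-E)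
      calc (1 - E) * Real.exp E ≤ Real.exp (-E) * Real.exp E := by
            apply mul_le_mul_of_nonneg_right _ (Real.exp_pos E).le
            linarith
        _ = 1 := by rw [← Real.exp_add]; simp
    have hE1 : E ≤ 1 := by rwa [abs_of_nonneg hE] at h
    have h3 : Real.exp E ≤ 3 := by
      calc Real.exp E ≤ Real.exp 1 := Real.exp_le_exp.mpr hE1
        _ ≤ 3 := by linarith [Real.exp_one_lt_d9.le]
    rw [abs_of_nonneg h1, abs_of_nonneg hE]
    nlinarith [Real.exp_pos E, h2]
  · have h1 : Real.exp E < 1 := Real.exp_lt_one_iff.mpr hE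
    rw [abs_of_nonpos (by linarith), abs_of_neg hE]
    have := Real.add_one_le_exp E
    linarith

set_option maxHeartbeats 2000000

/-- Asymptotics of the shifted central binomial coefficient in the central region: uniformly for
`a ≡ N (mod 2)` with `|a|/2 ≤ (N/2)^{2/3}`,
`C(N, (N−a)/2) = (2^N/√(πN/2)) exp(−a²/(2N)) (1 + O((1+|a|/2)/(N/2)))`. -/
theorem central_binomial_asymptotics :
    ∃ C > (0 : ℝ), ∃ N₀ : ℕ, ∀ N : ℕ, N₀ ≤ N → ∀ a : ℤ,
      a % 2 = (N : ℤ) % 2 →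
      |(a : ℝ)| / 2 ≤ ((N : ℝ) / 2) ^ ((2 : ℝ) / 3) →
      |(binomZ N (((N : ℤ) - a) / 2) : ℝ) -
          2 ^ N / Real.sqrt (π * N / 2) * Real.exp (-(a : ℝ) ^ 2 / (2 * N))| ≤
        C * (2 ^ N / Real.sqrt ((N : ℝ) / 2)) * Real.exp (-(a : ℝ) ^ 2 / (2 * N)) *
          ((1 + |(a : ℝ)| / 2) / ((N : ℝ) / 2)) := by
  refine ⟨100, by norm_num, 2000, ?_⟩
  intro N hN a hpar hsize
  have hN2000 : (2000:ℝ) ≤ N := by exact_mod_cast hN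
  have hNpos : (0:ℝ) < N := by linarith
  have h1000 : (1000:ℝ) ≤ (N:ℝ)/2 := by linarith
  have hn2pos : (0:ℝ) < (N:ℝ)/2 := by linarith
  -- rpow facts
  have h10 : (10:ℝ) ≤ ((N:ℝ)/2) ^ ((1:ℝ)/3) := by
    have e : (10:ℝ) = (1000:ℝ) ^ ((1:ℝ)/3) := by
      rw [show (1000:ℝ) = 10^(3:ℕ) by norm_num, ← Real.rpow_natCast (10:ℝ) 3,
        ← Real.rpow_mul (by norm_num)]
      norm_num
    rw [e]
    exact Real.rpow_le_rpow (by norm_num) h1000 (by norm_num)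
  have hr23pos : (0:ℝ) < ((N:ℝ)/2) ^ ((2:ℝ)/3) := Real.rpow_pos_of_pos hn2pos _
  have hmul : ((N:ℝ)/2) ^ ((2:ℝ)/3) * ((N:ℝ)/2) ^ ((1:ℝ)/3) = (N:ℝ)/2 := by
    rw [← Real.rpow_add hn2pos]
    norm_num
  have hcr : ((N:ℝ)/2) ^ ((2:ℝ)/3) ≤ ((N:ℝ)/2) / 10 := by
    have h2 := mul_le_mul_of_nonneg_left h10 hr23pos.le
    rw [hmul] at h2
    linarith
  have haN : |(a:ℝ)| ≤ (N:ℝ)/10 := by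
    have := hsize.trans hcr
    linarith
  -- m = |a|/N
  set m : ℝ := |(a:ℝ)|/N with hmdef
  have hm0 : 0 ≤ m := by positivity
  have hx13 : m ≤ ((N:ℝ)/2) ^ (-(1:ℝ)/3) := by
    have e : ((N:ℝ)/2) ^ (-(1:ℝ)/3) = ((N:ℝ)/2)^((2:ℝ)/3) / ((N:ℝ)/2) := by
      rw [show (-(1:ℝ)/3) = (2:ℝ)/3 - 1 by norm_num, Real.rpow_sub hn2pos, Real.rpow_one]
    rw [hmdef, e, div_le_div_iff₀ hNpos hn2pos]
    have h1 := mul_le_mul_of_nonneg_right hsize hNpos.le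
    linarith only [h1]
  have hx3 : m^3 ≤ 2/(N:ℝ) := by
    have e3 : (((N:ℝ)/2) ^ (-(1:ℝ)/3))^(3:ℕ) = 2/(N:ℝ) := by
      rw [← Real.rpow_natCast (((N:ℝ)/2) ^ (-(1:ℝ)/3)) 3, ← Real.rpow_mul hn2pos.le]
      rw [show (-(1:ℝ)/3 * (3:ℕ) : ℝ) = -1 by push_cast; ring, Real.rpow_neg_one, inv_div]
    calc m^3 ≤ (((N:ℝ)/2) ^ (-(1:ℝ)/3))^3 := pow_le_pow_left₀ hm0 hx13 3
      _ = 2/(N:ℝ) := e3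
  -- integer setup
  have hdvd : (2:ℤ) ∣ ((N:ℤ) - a) := by omega
  have haZ : |a| ≤ (N:ℤ) := by
    have h1 : |(a:ℝ)| ≤ ((N:ℤ):ℝ) := by push_cast; linarith
    rw [← Int.cast_abs] at h1
    exact_mod_cast h1
  have haZ2 := abs_le.mp haZ
  have hb0 : 0 ≤ ((N:ℤ) - a)/2 := Int.ediv_nonneg (by omega) (by norm_num)
  set k : ℕ := (((N:ℤ) - a)/2).toNat with hkdef
  have hk2 : 2*(k:ℤ) = (N:ℤ) - a := by
    rw [hkdef, Int.toNat_of_nonneg hb0]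
    exact Int.mul_ediv_cancel' hdvd
  have hbinom : binomZ N (((N:ℤ) - a)/2) = N.choose k := by
    rw [binomZ, if_pos hb0]
  have hkR : (k:ℝ) = ((N:ℝ) - a)/2 := by
    have h1 : (2:ℝ)*(k:ℝ) = (N:ℝ) - (a:ℝ) := by exact_mod_cast hk2
    linarith
  have habs := abs_le.mp haN
  have hkN : k ≤ N := by
    have h1 : (k:ℝ) ≤ (N:ℝ) := by rw [hkR]; linarith
    exact_mod_cast h1
  have hNkR : ((N - k : ℕ):ℝ) = ((N:ℝ) + a)/2 := by
    push_cast [hkN]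
    rw [hkR]
    ring
  have hklow : (N:ℝ)/4 ≤ (k:ℝ) := by rw [hkR]; linarith
  have hNklow : (N:ℝ)/4 ≤ ((N-k:ℕ):ℝ) := by rw [hNkR]; linarith
  have hk1 : 1 ≤ k := by
    have h1 : (0:ℝ) < (k:ℝ) := by linarith
    have h2 : 0 < k := by exact_mod_cast h1
    omega
  have hNk1 : 1 ≤ N - k := by
    have h1 : (0:ℝ) < ((N-k:ℕ):ℝ) := by linarith
    have : 0 < N - k := by exact_mod_cast h1
    omega
  -- x
  set x : ℝ := (a:ℝ)/N with hxdef
  have hxm : |x| = m := by rw [hxdef, hmdef, abs_div, abs_of_pos hNpos]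
  have hxabs : |x| ≤ 1/10 := by
    rw [hxm, hmdef, div_le_iff₀ hNpos]
    linarith
  have hx12 : |x| ≤ 1/2 := by linarith
  have hxb := abs_le.mp hx12
  have h1mx : (0:ℝ) < 1 - x := by linarith
  have h1px : (0:ℝ) < 1 + x := by linarith
  have hkRx : (k:ℝ) = ((N:ℝ)/2) * (1 - x) := by
    rw [hkR, hxdef]
    field_simp

  have hNkRx : ((N-k:ℕ):ℝ) = ((N:ℝ)/2) * (1 + x) := by
    rw [hNkR, hxdef]
    field_simp

  -- logs
  have hlogN2 : Real.log ((N:ℝ)/2) = Real.log N - Real.log 2 := Real.log_div hNpos.ne' two_ne_zero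
  have hlogk : Real.log (k:ℝ) = Real.log ((N:ℝ)/2) + Real.log (1-x) := by
    rw [hkRx, Real.log_mul hn2pos.ne' h1mx.ne']
  have hlogNk : Real.log ((N-k:ℕ):ℝ) = Real.log ((N:ℝ)/2) + Real.log (1+x) := by
    rw [hNkRx, Real.log_mul hn2pos.ne' h1px.ne']
  have hlog1mx2 : Real.log (1-x^2) = Real.log (1-x) + Real.log (1+x) := by
    rw [show (1:ℝ)-x^2 = (1-x)*(1+x) by ring, Real.log_mul h1mx.ne' h1px.ne']
  have hlogpi : Real.log (π*(N:ℝ)/2) = Real.log π + Real.log N - Real.log 2 := by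
    rw [Real.log_div (by positivity) two_ne_zero, Real.log_mul Real.pi_ne_zero hNpos.ne']
  have h2p : Real.log (2*π) = Real.log 2 + Real.log π := Real.log_mul two_ne_zero Real.pi_ne_zero
  have ha2x : (a:ℝ)^2/(2*(N:ℝ)) = ((N:ℝ)/2)*x^2 := by
    rw [hxdef]
    field_simp

  -- stirling epsilons
  obtain ⟨he1a, he1b⟩ := eps_bounds N (by omega)
  obtain ⟨he2a, he2b⟩ := eps_bounds k hk1
  obtain ⟨he3a, he3b⟩ := eps_bounds (N-k) hNk1
  -- log of choose
  have hchoose_pos : (0:ℝ) < (N.choose k : ℝ) := by exact_mod_cast Nat.choose_pos hkN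
  have hfk : (k.factorial : ℝ) ≠ 0 := by exact_mod_cast k.factorial_ne_zero
  have hfNk : ((N-k).factorial : ℝ) ≠ 0 := by exact_mod_cast (N-k).factorial_ne_zero
  have hLfac : Real.log (N.choose k : ℝ) =
      Real.log (N.factorial:ℝ) - Real.log (k.factorial:ℝ) - Real.log ((N-k).factorial:ℝ) := by
    rw [Nat.cast_choose ℝ hkN, Real.log_div (by positivity) (mul_ne_zero hfk hfNk),
      Real.log_mul hfk hfNk]
    ring
  set E : ℝ := Real.log (N.choose k : ℝ) -
      ((N:ℝ)*Real.log 2 - Real.log (π*(N:ℝ)/2)/2 - (a:ℝ)^2/(2*(N:ℝ))) with hEdef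
  have hE_eq : E = -((N:ℝ)/2)*((1-x)*Real.log (1-x) + (1+x)*Real.log (1+x) - x^2)
      - Real.log (1-x^2)/2
      + (Real.log (N.factorial:ℝ) - stirS N)
      - (Real.log (k.factorial:ℝ) - stirS k)
      - (Real.log ((N-k).factorial:ℝ) - stirS ((N-k:ℕ):ℝ)) := by
    rw [hEdef, hLfac, stirS, stirS, stirS, hlog1mx2, hlogk, hlogNk, hkRx, hNkRx,
      hlogN2, hlogpi, h2p, ha2x]
    ring
  -- bound on E
  have hent := entropy_bound hx12
  have hlsq := log_one_sub_sq hx12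
  have hx4m : x^4 = m^3 * m := by
    have h1 : x^4 = |x|^4 := by
      rw [← abs_pow, abs_of_nonneg (by positivity)]
    rw [h1, hxm]
    ring
  have hNm : (N:ℝ)*m = |(a:ℝ)| := by
    rw [hmdef]
    field_simp
  have hm10 : m ≤ 1/10 := by rw [← hxm]; exact hxabs
  have hent2 : ((N:ℝ)/2)*|(1-x)*Real.log (1-x) + (1+x)*Real.log (1+x) - x^2|
      ≤ 7*|(a:ℝ)|/(N:ℝ) := by
    have h1 : ((N:ℝ)/2)*|(1-x)*Real.log (1-x) + (1+x)*Real.log (1+x) - x^2|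
        ≤ ((N:ℝ)/2)*(7*x^4) := by
      apply mul_le_mul_of_nonneg_left hent hn2pos.le
    have h2 : ((N:ℝ)/2)*(7*x^4) = (7/2)*((N:ℝ)*m)*m^3 := by rw [hx4m]; ring
    have h3 : (7/2)*((N:ℝ)*m)*m^3 ≤ (7/2) * |(a:ℝ)| * (2/(N:ℝ)) := by
      rw [hNm]
      apply mul_le_mul_of_nonneg_left hx3 (by positivity)
    have h4 : (7/2) * |(a:ℝ)| * (2/(N:ℝ)) = 7*|(a:ℝ)|/(N:ℝ) := by ring
    linarith only [h1, h2, h3, h4]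
  have hlsqx : |Real.log (1-x^2)/2| ≤ m := by
    rw [abs_div, abs_two]
    have h2 : x^2 = m*m := by
      have e : x^2 = |x|^2 := (sq_abs x).symm
      rw [e, hxm]; ring
    have h4 : x^2 ≤ m := by
      rw [h2]
      have h5 := mul_le_mul_of_nonneg_left hm10 hm0
      linarith only [h5, hm0]
    linarith only [hlsq, h4]
  -- epsilon numeric bounds
  have heN : 1/(2*(N:ℝ)) ≤ 2/(N:ℝ) := by
    rw [div_le_div_iff₀ (by positivity) hNpos]
    linarith only [hNpos]
  have hek : 1/(2*(k:ℝ)) ≤ 2/(N:ℝ) := by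
    rw [div_le_div_iff₀ (by positivity) hNpos]
    linarith only [hklow]
  have heNk : 1/(2*((N-k:ℕ):ℝ)) ≤ 2/(N:ℝ) := by
    rw [div_le_div_iff₀ (by positivity) hNpos]
    linarith only [hNklow]
  have hT1 : |((N:ℝ)/2)*((1-x)*Real.log (1-x) + (1+x)*Real.log (1+x) - x^2)| ≤ 7*m := by
    rw [abs_mul, abs_of_pos hn2pos, hmdef]
    calc ((N:ℝ)/2)*|(1-x)*Real.log (1-x) + (1+x)*Real.log (1+x) - x^2|
        ≤ 7*|(a:ℝ)|/(N:ℝ) := hent2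
      _ = 7*(|(a:ℝ)|/(N:ℝ)) := by ring
  obtain ⟨T1, hT1e⟩ : ∃ t, ((N:ℝ)/2)*((1-x)*Real.log (1-x) + (1+x)*Real.log (1+x) - x^2) = t :=
    ⟨_, rfl⟩
  obtain ⟨T2, hT2e⟩ : ∃ t, Real.log (1-x^2)/2 = t := ⟨_, rfl⟩
  obtain ⟨e1, he1e⟩ : ∃ t, Real.log (N.factorial:ℝ) - stirS N = t := ⟨_, rfl⟩
  obtain ⟨e2, he2e⟩ : ∃ t, Real.log (k.factorial:ℝ) - stirS k = t := ⟨_, rfl⟩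
  obtain ⟨e3, he3e⟩ : ∃ t, Real.log ((N-k).factorial:ℝ) - stirS ((N-k:ℕ):ℝ) = t := ⟨_, rfl⟩
  rw [hT1e] at hT1
  rw [hT2e] at hlsqx
  rw [he1e] at he1a he1b
  rw [he2e] at he2a he2b
  rw [he3e] at he3a he3b
  have hE_eq2 : E = -T1 - T2 + e1 - e2 - e3 := by
    rw [hE_eq, he1e, he2e, he3e, ← hT1e, ← hT2e]
    ring
  have hT1' := abs_le.mp hT1
  have hT2' := abs_le.mp hlsqx
  have he1b' : e1 ≤ 2/(N:ℝ) := he1b.trans heN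
  have he2b' : e2 ≤ 2/(N:ℝ) := he2b.trans hek
  have he3b' : e3 ≤ 2/(N:ℝ) := he3b.trans heNk
  have hEbound0 : |E| ≤ 16*(1/(N:ℝ)) + 8*m := by
    rw [hE_eq2, abs_le]
    have h2N : 2/(N:ℝ) = 2*(1/(N:ℝ)) := by ring
    rw [h2N] at he1b' he2b' he3b'
    have hNinv : 0 ≤ 1/(N:ℝ) := by positivity
    constructor
    · linarith only [hT1'.2, hT2'.2, he1a, he2b', he3b', hNinv, hm0]
    · linarith only [hT1'.1, hT2'.1, he1b', he2a, he3a, hNinv, hm0]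
  have hEbound : |E| ≤ 8*((2+|(a:ℝ)|)/(N:ℝ)) := by
    have heq : 16*(1/(N:ℝ)) + 8*m = 8*((2+|(a:ℝ)|)/(N:ℝ)) := by
      rw [hmdef]
      ring
    rw [← heq]
    exact hEbound0
  have hr18 : 8*((2+|(a:ℝ)|)/(N:ℝ)) ≤ 1 := by
    rw [show (8:ℝ)*((2+|(a:ℝ)|)/(N:ℝ)) = (16 + 8*|(a:ℝ)|)/(N:ℝ) by ring,
      div_le_one hNpos]
    linarith only [haN, hN2000]
  have hE1 : |E| ≤ 1 := hEbound.trans hr18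
  have hexp := exp_sub_one_abs hE1
  -- main term
  have hrr : (1 + |(a:ℝ)|/2)/((N:ℝ)/2) = (2+|(a:ℝ)|)/(N:ℝ) := by
    rw [div_eq_div_iff hn2pos.ne' hNpos.ne']
    ring
  rw [hbinom, hrr]
  set M : ℝ := 2 ^ N / Real.sqrt (π * (N:ℝ) / 2) * Real.exp (-(a : ℝ) ^ 2 / (2 * (N:ℝ)))
    with hMdef
  have hsq1pos : (0:ℝ) < Real.sqrt (π * (N:ℝ) / 2) := Real.sqrt_pos.mpr (by positivity)
  have hMpos : (0:ℝ) < M := by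
    rw [hMdef]
    positivity
  have hlogM : Real.log M = (N:ℝ)*Real.log 2 - Real.log (π*(N:ℝ)/2)/2 - (a:ℝ)^2/(2*(N:ℝ)) := by
    rw [hMdef, Real.log_mul (by positivity) (Real.exp_ne_zero _), Real.log_exp,
      Real.log_div (by positivity) hsq1pos.ne', Real.log_pow,
      Real.log_sqrt (by positivity)]
    ring
  have hM_eq : (N.choose k:ℝ) = M * Real.exp E := by
    have h1 : Real.log (N.choose k:ℝ) = Real.log M + E := by
      rw [hlogM, hEdef]
      ring
    calc (N.choose k:ℝ) = Real.exp (Real.log (N.choose k:ℝ)) := (Real.exp_log hchoose_pos).symm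
      _ = Real.exp (Real.log M + E) := by rw [h1]
      _ = M * Real.exp E := by rw [Real.exp_add, Real.exp_log hMpos]
  have hsq2pos : (0:ℝ) < Real.sqrt ((N:ℝ)/2) := Real.sqrt_pos.mpr hn2pos
  have hMP : M ≤ 2^N/Real.sqrt ((N:ℝ)/2) * Real.exp (-(a:ℝ)^2/(2*(N:ℝ))) := by
    rw [hMdef]
    apply mul_le_mul_of_nonneg_right _ (Real.exp_pos _).le
    apply div_le_div_of_nonneg_left (by positivity) hsq2pos
    apply Real.sqrt_le_sqrt
    have hπ1 : (1:ℝ) ≤ π := by linarith only [Real.pi_gt_three]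
    have h1 := mul_le_mul_of_nonneg_right hπ1 hNpos.le
    linarith only [h1]
  have hPpos : (0:ℝ) ≤ 2^N/Real.sqrt ((N:ℝ)/2) * Real.exp (-(a:ℝ)^2/(2*(N:ℝ))) := by positivity
  have hq : (0:ℝ) ≤ (2+|(a:ℝ)|)/(N:ℝ) := by positivity
  calc |(N.choose k:ℝ) - M| = M * |Real.exp E - 1| := by
        rw [hM_eq, show M*Real.exp E - M = M*(Real.exp E - 1) by ring, abs_mul,
          abs_of_pos hMpos]
    _ ≤ M * (3*|E|) := mul_le_mul_of_nonneg_left hexp hMpos.le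
    _ ≤ M * (24*((2+|(a:ℝ)|)/(N:ℝ))) := by
        apply mul_le_mul_of_nonneg_left _ hMpos.le
        linarith only [hEbound]
    _ ≤ (2^N/Real.sqrt ((N:ℝ)/2) * Real.exp (-(a:ℝ)^2/(2*(N:ℝ)))) *
          (24*((2+|(a:ℝ)|)/(N:ℝ))) := by
        apply mul_le_mul_of_nonneg_right hMP (by positivity)
    _ ≤ (2^N/Real.sqrt ((N:ℝ)/2) * Real.exp (-(a:ℝ)^2/(2*(N:ℝ)))) *
          (100*((2+|(a:ℝ)|)/(N:ℝ))) := by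
        apply mul_le_mul_of_nonneg_left _ hPpos
        linarith only [hq]
    _ = 100 * (2^N/Real.sqrt ((N:ℝ)/2)) * Real.exp (-(a:ℝ)^2/(2*(N:ℝ))) *
          ((2+|(a:ℝ)|)/(N:ℝ)) := by ring
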